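/- Let a ≥ 1 be a real number, let n ≥ 4a be an integer, let f: {0,1}^n → ℝ be a nonnegative a-self-bounding function, and let ρ ∈ [0,1]. Then for every x ∈ {0,1}^n, (T_ρ f)(x) ≥ (1 − (1−ρ)/(2(1 − (a−1)/n)))^a · f(x). -/

import Mathlib

noncomputable section

/-- A function `f : {0,1}^n → ℝ` is `a`-self-bounding. -/
def SelfBounding (n : ℕ) (a : ℝ) (f : (Fin n → Bool) → ℝ) : Prop :=
  ∀ x : Fin n → Bool,
    (∀ i : Fin n,
      f x - min (f (Function.update x i false)) (f (Function.update x i true)) ≤ 1) ∧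
    ∑ i : Fin n,
      (f x - min (f (Function.update x i false)) (f (Function.update x i true))) ≤ a * f x

/-- The noise operator `T_ρ`: `(T_ρ f)(x) = E_{y ∼ N_ρ(x)}[f(y)]`, where each coordinate of `y`
agrees with `x` with probability `(1+ρ)/2` independently. -/
def noiseOp (n : ℕ) (ρ : ℝ) (f : (Fin n → Bool) → ℝ) (x : Fin n → Bool) : ℝ :=
  ∑ y : Fin n → Bool,
    (∏ i : Fin n, if y i = x i then (1 + ρ) / 2 else (1 - ρ) / 2) * f y

namespace NoiseOpAux

variable {n : ℕ}

def Wt (x y : Fin n → Bool) (t : ℝ) : ℝ := ∏ i, if y i = x i then 1 - t else t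

def Pp (x y : Fin n → Bool) (i : Fin n) (t : ℝ) : ℝ :=
  ∏ j ∈ Finset.univ.erase i, if y j = x j then 1 - t else t

def dW (x y : Fin n → Bool) (t : ℝ) : ℝ :=
  ∑ i, Pp x y i t * (if y i = x i then (-1 : ℝ) else 1)

def Ft (f : (Fin n → Bool) → ℝ) (x : Fin n → Bool) (t : ℝ) : ℝ := ∑ y, Wt x y t * f y

def Ft' (f : (Fin n → Bool) → ℝ) (x : Fin n → Bool) (t : ℝ) : ℝ := ∑ y, dW x y t * f y

def Dd (f : (Fin n → Bool) → ℝ) (i : Fin n) (y : Fin n → Bool) : ℝ :=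
  f y - min (f (Function.update y i false)) (f (Function.update y i true))

lemma Dd_nonneg (f : (Fin n → Bool) → ℝ) (i : Fin n) (y : Fin n → Bool) : 0 ≤ Dd f i y := by
  unfold Dd
  cases hb : y i
  · have h : Function.update y i false = y := by rw [← hb]; exact Function.update_eq_self i y
    rw [h]
    have := min_le_left (f y) (f (Function.update y i true))
    linarith
  · have h : Function.update y i true = y := by rw [← hb]; exact Function.update_eq_self i y
    rw [h]
    have := min_le_right (f (Function.update y i false)) (f y)
    linarith

lemma flip_ge (f : (Fin n → Bool) → ℝ) (i : Fin n) (y : Fin n → Bool) :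
    f y - Dd f i y ≤ f (Function.update y i (!(y i))) := by
  unfold Dd
  cases hb : y i
  · have := min_le_right (f (Function.update y i false)) (f (Function.update y i true))
    simpa using this
  · have := min_le_left (f (Function.update y i false)) (f (Function.update y i true))
    simpa using this

lemma Wt_nonneg (x y : Fin n → Bool) {t : ℝ} (ht0 : 0 ≤ t) (ht1 : t ≤ 1) : 0 ≤ Wt x y t :=
  Finset.prod_nonneg fun i _ => by split <;> linarith

lemma Pp_nonneg (x y : Fin n → Bool) (i : Fin n) {t : ℝ} (ht0 : 0 ≤ t) (ht1 : t ≤ 1) :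
    0 ≤ Pp x y i t :=
  Finset.prod_nonneg fun j _ => by split <;> linarith

lemma Wt_eq_mul (x y : Fin n → Bool) (i : Fin n) (t : ℝ) :
    Wt x y t = (if y i = x i then 1 - t else t) * Pp x y i t :=
  (Finset.mul_prod_erase Finset.univ _ (Finset.mem_univ i)).symm

lemma Wt_zero (x y : Fin n → Bool) : Wt x y 0 = if y = x then 1 else 0 := by
  unfold Wt
  by_cases h : y = x
  · subst h; simp
  · rw [if_neg h]
    obtain ⟨i, hi⟩ : ∃ i, y i ≠ x i := by
      by_contra hc
      push_neg at hc
      exact h (funext hc)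
    exact Finset.prod_eq_zero (Finset.mem_univ i) (by simp [hi])

lemma Ft_zero (f : (Fin n → Bool) → ℝ) (x : Fin n → Bool) : Ft f x 0 = f x := by
  unfold Ft
  rw [Finset.sum_eq_single x]
  · simp [Wt_zero]
  · intro y _ hy; simp [Wt_zero, hy]
  · intro h; exact absurd (Finset.mem_univ x) h

lemma hasDerivAt_Wt (x y : Fin n → Bool) (t : ℝ) : HasDerivAt (Wt x y) (dW x y t) t := by
  have h := HasDerivAt.fun_finset_prod (u := (Finset.univ : Finset (Fin n))) (x := t)
      (f := fun i s => if y i = x i then 1 - s else s)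
      (f' := fun i => if y i = x i then (-1 : ℝ) else 1)
      (fun i _ => by
        by_cases hi : y i = x i
        · simp only [if_pos hi]
          simpa using (hasDerivAt_id t).const_sub 1
        · simp only [if_neg hi]
          exact hasDerivAt_id t)
  have h' : HasDerivAt (Wt x y) _ t := h
  simpa [dW, Pp, smul_eq_mul] using h'

lemma hasDerivAt_Ft (f : (Fin n → Bool) → ℝ) (x : Fin n → Bool) (t : ℝ) :
    HasDerivAt (Ft f x) (Ft' f x t) t := by
  unfold Ft Ft'
  exact HasDerivAt.fun_sum fun y _ => (hasDerivAt_Wt x y t).mul_const (f y)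

lemma key (a : ℝ) (f : (Fin n → Bool) → ℝ) (hf0 : ∀ y, 0 ≤ f y) (hf : SelfBounding n a f)
    (x : Fin n → Bool) {t : ℝ} (ht0 : 0 ≤ t) (ht1 : t < 1) :
    -((1 - t)⁻¹ * (a * Ft f x t)) ≤ Ft' f x t := by
  have h1t : (0:ℝ) < 1 - t := by linarith
  have ht1' : t ≤ 1 := le_of_lt ht1
  -- per-coordinate claim
  have claim : ∀ i : Fin n,
      -((1 - t)⁻¹ * ∑ y, Wt x y t * Dd f i y) ≤
        ∑ y, Pp x y i t * (if y i = x i then (-1 : ℝ) else 1) * f y := by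
    intro i
    set g : (Fin n → Bool) → ℝ :=
      fun y => Pp x y i t * (if y i = x i then (-1 : ℝ) else 1) * f y with hg
    have hinv : Function.Involutive (fun y : Fin n → Bool => Function.update y i (!(y i))) := by
      intro y; funext j
      by_cases hj : j = i
      · subst hj; simp
      · simp [Function.update_of_ne hj]
    -- split + reindex
    have h2 : (∑ y, if y i = x i then (0:ℝ) else g y) =
        ∑ y, (if y i = x i then g (Function.update y i (!(y i))) else 0) := by
      refine Fintype.sum_bijective _ hinv.bijective _ _ (fun y => ?_)
      simp only [Function.update_self]
      have hσσ : Function.update (Function.update y i (!(y i))) i (!(!(y i))) = y := by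
        funext j
        by_cases hj : j = i
        · subst hj; simp
        · simp [Function.update_of_ne hj]
      by_cases hyi : y i = x i
      · have hne : ¬ ((!(y i)) = x i) := by rw [hyi]; exact Bool.not_ne_self (x i)
        rw [if_pos hyi, if_neg hne]
      · have heq : (!(y i)) = x i := by
          revert hyi; cases y i <;> cases x i <;> simp
        rw [if_neg hyi, if_pos heq, hσσ]
    have hsplit : (∑ y, g y) =
        ∑ y, (if y i = x i then g y + g (Function.update y i (!(y i))) else 0) := by
      have h1 : (∑ y, g y) =
          (∑ y, if y i = x i then g y else 0) + (∑ y, if y i = x i then (0:ℝ) else g y) := by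
        rw [← Finset.sum_add_distrib]
        exact Finset.sum_congr rfl fun y _ => by split <;> ring
      rw [h1, h2, ← Finset.sum_add_distrib]
      exact Finset.sum_congr rfl fun y _ => by split <;> ring
    have hP : ∀ y, 0 ≤ Pp x y i t := fun y => Pp_nonneg x y i ht0 ht1'
    calc -((1 - t)⁻¹ * ∑ y, Wt x y t * Dd f i y)
        = ∑ y, -((1 - t)⁻¹ * (Wt x y t * Dd f i y)) := by
          rw [Finset.mul_sum, ← Finset.sum_neg_distrib]
      _ ≤ ∑ y, (if y i = x i then g y + g (Function.update y i (!(y i))) else 0) := by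
          refine Finset.sum_le_sum fun y _ => ?_
          by_cases hyi : y i = x i
          · rw [if_pos hyi]
            have hWP : Wt x y t = (1 - t) * Pp x y i t := by
              rw [Wt_eq_mul x y i t, if_pos hyi]
            have hPσ : Pp x (Function.update y i (!(y i))) i t = Pp x y i t := by
              unfold Pp
              refine Finset.prod_congr rfl fun j hj => ?_
              rw [Function.update_of_ne (Finset.ne_of_mem_erase hj)]
            have hsσ : ¬ ((Function.update y i (!(y i))) i = x i) := by
              simp [Function.update_self, hyi]
            have hflip : f y - Dd f i y ≤ f (Function.update y i (!(y i))) := flip_ge f i y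
            have hgsum : g y + g (Function.update y i (!(y i))) =
                Pp x y i t * (f (Function.update y i (!(y i))) - f y) := by
              rw [hg]; simp only [hPσ, if_pos hyi, if_neg hsσ]; ring
            rw [hgsum, hWP]
            have h5 : -(Pp x y i t * Dd f i y) ≤
                Pp x y i t * (f (Function.update y i (!(y i))) - f y) := by
              have := mul_le_mul_of_nonneg_left (by linarith [hflip] : -(Dd f i y) ≤
                  f (Function.update y i (!(y i))) - f y) (hP y)
              rw [mul_neg] at this
              linarith [this]
            have h6 : (1 - t)⁻¹ * ((1 - t) * Pp x y i t * Dd f i y) =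
                Pp x y i t * Dd f i y := by
              field_simp
            calc -((1 - t)⁻¹ * ((1 - t) * Pp x y i t * Dd f i y))
                = -(Pp x y i t * Dd f i y) := by rw [h6]
              _ ≤ _ := h5
          · rw [if_neg hyi]
            have : 0 ≤ (1 - t)⁻¹ * (Wt x y t * Dd f i y) :=
              mul_nonneg (inv_nonneg.mpr (le_of_lt h1t))
                (mul_nonneg (Wt_nonneg x y ht0 ht1') (Dd_nonneg f i y))
            linarith
      _ = ∑ y, g y := hsplit.symm
  -- assemble
  have hFt' : Ft' f x t = ∑ i : Fin n, ∑ y, Pp x y i t * (if y i = x i then (-1:ℝ) else 1) * f y := by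
    unfold Ft' dW
    simp_rw [Finset.sum_mul]
    exact Finset.sum_comm
  have hsum1 : (∑ i : Fin n, ∑ y, Wt x y t * Dd f i y) ≤ a * Ft f x t := by
    rw [Finset.sum_comm]
    have : ∀ y : Fin n → Bool, (∑ i : Fin n, Wt x y t * Dd f i y) ≤ Wt x y t * (a * f y) := by
      intro y
      rw [← Finset.mul_sum]
      exact mul_le_mul_of_nonneg_left (hf y).2 (Wt_nonneg x y ht0 ht1')
    calc (∑ y, ∑ i : Fin n, Wt x y t * Dd f i y) ≤ ∑ y, Wt x y t * (a * f y) :=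
          Finset.sum_le_sum fun y _ => this y
      _ = a * Ft f x t := by unfold Ft; rw [Finset.mul_sum]; exact Finset.sum_congr rfl fun y _ => by ring
  calc -((1 - t)⁻¹ * (a * Ft f x t))
      ≤ -((1 - t)⁻¹ * ∑ i : Fin n, ∑ y, Wt x y t * Dd f i y) := by
        have := mul_le_mul_of_nonneg_left hsum1 (inv_nonneg.mpr (le_of_lt h1t))
        linarith
    _ = ∑ i : Fin n, -((1 - t)⁻¹ * ∑ y, Wt x y t * Dd f i y) := by
        rw [Finset.mul_sum, ← Finset.sum_neg_distrib]
    _ ≤ ∑ i : Fin n, ∑ y, Pp x y i t * (if y i = x i then (-1:ℝ) else 1) * f y :=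
        Finset.sum_le_sum fun i _ => claim i
    _ = Ft' f x t := hFt'.symm

lemma Ft_lower (a : ℝ) (ha : 1 ≤ a) (f : (Fin n → Bool) → ℝ) (hf0 : ∀ y, 0 ≤ f y)
    (hf : SelfBounding n a f) (x : Fin n → Bool) {e : ℝ} (he0 : 0 ≤ e) (he1 : e ≤ 1/2) :
    (1 - e) ^ (a : ℝ) * f x ≤ Ft f x e := by
  have ha0 : (0:ℝ) ≤ a := le_trans zero_le_one ha
  set G : ℝ → ℝ := fun t => Ft f x t * (1 - t) ^ (-a : ℝ) with hGdef
  have hder : ∀ t : ℝ, t < 1 →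
      HasDerivAt G (Ft' f x t * (1 - t) ^ (-a : ℝ) +
        Ft f x t * (a * (1 - t) ^ (-a - 1 : ℝ))) t := by
    intro t ht
    have h1t : (0:ℝ) < 1 - t := by linarith
    have h1 : HasDerivAt (fun s : ℝ => 1 - s) (-1 : ℝ) t := by
      simpa using (hasDerivAt_id t).const_sub 1
    have h2 : HasDerivAt (fun u : ℝ => u ^ (-a : ℝ)) ((-a) * (1 - t) ^ (-a - 1 : ℝ)) (1 - t) :=
      Real.hasDerivAt_rpow_const (Or.inl (ne_of_gt h1t))
    have h3 : HasDerivAt (fun s : ℝ => (1 - s) ^ (-a : ℝ))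
        (a * (1 - t) ^ (-a - 1 : ℝ)) t := by
      have := h2.comp t h1
      exact this.congr_deriv (by ring)
    have := (hasDerivAt_Ft f x t).mul h3
    exact this
  have hmono : MonotoneOn G (Set.Icc (0:ℝ) (1/2)) := by
    apply monotoneOn_of_deriv_nonneg (convex_Icc _ _)
    · intro t ht
      exact ((hder t (by rcases ht with ⟨_, h⟩; linarith)).continuousAt).continuousWithinAt
    · rw [interior_Icc]
      intro t ht
      exact ((hder t (by rcases ht with ⟨_, h⟩; linarith)).differentiableAt).differentiableWithinAt
    · rw [interior_Icc]
      intro t ht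
      obtain ⟨ht0, ht12⟩ := ht
      have ht1 : t < 1 := by linarith
      have h1t : (0:ℝ) < 1 - t := by linarith
      rw [(hder t ht1).deriv]
      have hc : (0:ℝ) < (1 - t) ^ (-a : ℝ) := Real.rpow_pos_of_pos h1t _
      have hkey := key a f hf0 hf x (le_of_lt ht0) ht1
      have hrw : (1 - t) ^ (-a - 1 : ℝ) = (1 - t) ^ (-a : ℝ) * (1 - t)⁻¹ := by
        rw [show (-a - 1 : ℝ) = -a + -1 by ring, Real.rpow_add h1t, Real.rpow_neg_one]
      have h6 : 0 ≤ Ft' f x t + (1 - t)⁻¹ * (a * Ft f x t) := by linarith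
      have h7 := mul_nonneg (le_of_lt hc) h6
      calc (0:ℝ) ≤ (1 - t) ^ (-a : ℝ) * (Ft' f x t + (1 - t)⁻¹ * (a * Ft f x t)) := h7
        _ = Ft' f x t * (1 - t) ^ (-a : ℝ) + Ft f x t * (a * (1 - t) ^ (-a - 1 : ℝ)) := by
            rw [hrw]; ring
  have h0m : (0:ℝ) ∈ Set.Icc (0:ℝ) (1/2) := by constructor <;> norm_num
  have hem : e ∈ Set.Icc (0:ℝ) (1/2) := ⟨he0, he1⟩
  have hGle := hmono h0m hem he0
  have hG0 : G 0 = f x := by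
    rw [hGdef]
    simp only [Ft_zero f x, sub_zero, Real.one_rpow, mul_one]
  have h1e : (0:ℝ) < 1 - e := by linarith
  have hGe : G e = Ft f x e * (1 - e) ^ (-a : ℝ) := rfl
  rw [hG0, hGe] at hGle
  have hpos : (0:ℝ) < (1 - e) ^ (a : ℝ) := Real.rpow_pos_of_pos h1e _
  have := mul_le_mul_of_nonneg_left hGle (le_of_lt hpos)
  calc (1 - e) ^ (a : ℝ) * f x ≤ (1 - e) ^ (a : ℝ) * (Ft f x e * (1 - e) ^ (-a : ℝ)) := this
    _ = Ft f x e * ((1 - e) ^ (a : ℝ) * (1 - e) ^ (-a : ℝ)) := by ring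
    _ = Ft f x e := by
        rw [← Real.rpow_add h1e]
        norm_num

end NoiseOpAux

open NoiseOpAux in
theorem noiseOp_pointwise_bound (n : ℕ) (a : ℝ) (ha : 1 ≤ a) (hn : 4 * a ≤ (n : ℝ))
    (f : (Fin n → Bool) → ℝ) (hf0 : ∀ x, 0 ≤ f x) (hf : SelfBounding n a f)
    (ρ : ℝ) (hρ : ρ ∈ Set.Icc (0 : ℝ) 1) (x : Fin n → Bool) :
    (1 - (1 - ρ) / (2 * (1 - (a - 1) / (n : ℝ)))) ^ (a : ℝ) * f x ≤ noiseOp n ρ f x := by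
  obtain ⟨hρ0, hρ1⟩ := hρ
  have ha0 : (0:ℝ) ≤ a := by linarith
  have hn0 : (0:ℝ) < (n : ℝ) := by linarith
  have hd : (3:ℝ)/4 ≤ 1 - (a - 1) / (n : ℝ) := by
    have h1 : (a - 1) / (n : ℝ) ≤ 1/4 := by
      rw [div_le_iff₀ hn0]; linarith
    linarith
  set e := (1 - ρ) / 2 with he
  have he0 : 0 ≤ e := by rw [he]; linarith
  have he1 : e ≤ 1/2 := by rw [he]; linarith
  have hdpos : (0:ℝ) < 2 * (1 - (a - 1) / (n : ℝ)) := by linarith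
  have hB1 : 1 - (1 - ρ) / (2 * (1 - (a - 1) / (n : ℝ))) ≤ 1 - e := by
    have h2 : e ≤ (1 - ρ) / (2 * (1 - (a - 1) / (n : ℝ))) := by
      have hfrac : 0 ≤ (a - 1) / (n : ℝ) := div_nonneg (by linarith) (le_of_lt hn0)
      rw [he, div_le_div_iff₀ (by norm_num) hdpos]
      nlinarith [mul_nonneg (by linarith : (0:ℝ) ≤ 1 - ρ) hfrac]
    linarith
  have hB0 : 0 ≤ 1 - (1 - ρ) / (2 * (1 - (a - 1) / (n : ℝ))) := by
    have h3 : (1 - ρ) / (2 * (1 - (a - 1) / (n : ℝ))) ≤ 1 := by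
      rw [div_le_one hdpos]; linarith
    linarith
  have hnoise : noiseOp n ρ f x = Ft f x e := by
    have h12 : (1 + ρ) / 2 = 1 - e := by rw [he]; ring
    unfold noiseOp Ft Wt
    simp only [h12, ← he]
  calc (1 - (1 - ρ) / (2 * (1 - (a - 1) / (n : ℝ)))) ^ (a : ℝ) * f x
      ≤ (1 - e) ^ (a : ℝ) * f x :=
        mul_le_mul_of_nonneg_right (Real.rpow_le_rpow hB0 hB1 ha0) (hf0 x)
    _ ≤ Ft f x e := Ft_lower a ha f hf0 hf x he0 he1
    _ = noiseOp n ρ f x := hnoise.symm
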